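/- Let A ⊊ B be an extension of integral domains, X an indeterminate, and R = A + X·B[X] (respectively R = A + X·B[[X]]). If R is a big ideal domain, then A is a big ideal domain and B is a field. -/

import Mathlib

set_option linter.unusedSectionVars false
set_option maxHeartbeats 1000000

/-- An ideal `I` of a commutative ring `R` is a *big ideal* if whenever `J ⊊ I`,
`J ^ n ⊊ I ^ n` for every positive integer `n`. -/
def Ideal.IsBig {R : Type*} [CommRing R] (I : Ideal R) : Prop :=
  ∀ J : Ideal R, J < I → ∀ n : ℕ, 1 ≤ n → J ^ n < I ^ n

/-- A commutative ring is a *big ideal ring* if every ideal is a big ideal. -/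
def IsBigIdealRing (R : Type*) [CommRing R] : Prop :=
  ∀ I : Ideal R, I.IsBig


private lemma idealPowMono {R : Type*} [CommRing R] {I J : Ideal R} (h : J ≤ I) :
    ∀ n : ℕ, J ^ n ≤ I ^ n := by
  intro n
  induction n with
  | zero => simp
  | succ k ih => rw [pow_succ, pow_succ]; exact Ideal.mul_mono ih h

private lemma isBigIdealRing_of_retract {S T : Type*} [CommRing S] [CommRing T]
    (φ : S →+* T) (ψ : T →+* S) (hr : ∀ s, ψ (φ s) = s)
    (H : IsBigIdealRing T) : IsBigIdealRing S := by
  intro a J hJ n hn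
  refine lt_of_le_of_ne (idealPowMono hJ.le n) fun he => ?_
  have hmaplt : J.map φ < a.map φ := by
    refine lt_of_le_of_ne (Ideal.map_mono hJ.le) fun hem => ?_
    have hle : Ideal.map φ a ≤ Ideal.comap ψ J := by
      rw [← hem]
      refine Ideal.map_le_iff_le_comap.mpr fun x hx => ?_
      simp only [Ideal.mem_comap, hr]
      exact hx
    have : a ≤ J := by
      intro x hx
      have := hle (Ideal.mem_map_of_mem φ hx)
      simpa only [Ideal.mem_comap, hr] using this
    exact hJ.not_ge this
  have hbig := H (a.map φ) (J.map φ) hmaplt n hn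
  rw [← Ideal.map_pow, ← Ideal.map_pow, he] at hbig
  exact hbig.ne rfl

section BigA

variable {B : Type*} [CommRing B] [IsDomain B] (A : Subring B)

private lemma bigA_poly (H : IsBigIdealRing (A.comap (Polynomial.constantCoeff (R := B)))) :
    IsBigIdealRing A := by
  refine isBigIdealRing_of_retract ?_ ?_ ?_ H
  · exact { toFun := fun a => ⟨Polynomial.C (a : B), by simp [Subring.mem_comap]⟩
            map_one' := by ext; simp
            map_mul' := fun x y => by ext; simp
            map_zero' := by ext; simp
            map_add' := fun x y => by ext; simp }
  · exact { toFun := fun f => ⟨Polynomial.constantCoeff (f : Polynomial B),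
              Subring.mem_comap.mp f.2⟩
            map_one' := by ext; simp
            map_mul' := fun x y => by ext; simp
            map_zero' := by ext; simp
            map_add' := fun x y => by ext; simp }
  · intro s; ext; simp

private lemma bigA_ps (H : IsBigIdealRing (A.comap (PowerSeries.constantCoeff (R := B)))) :
    IsBigIdealRing A := by
  refine isBigIdealRing_of_retract ?_ ?_ ?_ H
  · exact { toFun := fun a => ⟨PowerSeries.C (R := B) (a : B), by simp [Subring.mem_comap]⟩
            map_one' := by ext; simp
            map_mul' := fun x y => by ext; simp
            map_zero' := by ext; simp
            map_add' := fun x y => by ext; simp }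
  · exact { toFun := fun f => ⟨PowerSeries.constantCoeff (R := B) (f : PowerSeries B),
              Subring.mem_comap.mp f.2⟩
            map_one' := by ext; simp
            map_mul' := fun x y => by ext; simp
            map_zero' := by ext; simp
            map_add' := fun x y => by ext; simp }
  · intro s; ext; simp

end BigA

section PolyField

variable {B : Type*} [CommRing B] [IsDomain B] (A : Subring B)

open Polynomial Pointwise

private lemma memR_poly (b : B) (j k : ℕ) (hk : k ≠ 0) :
    (C b ^ j * X ^ k : B[X]) ∈ A.comap (Polynomial.constantCoeff (R := B)) := by
  simp only [Subring.mem_comap, map_mul, map_pow]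
  rw [show Polynomial.constantCoeff (X : B[X]) = 0 by
        simp [Polynomial.constantCoeff_apply], zero_pow hk, mul_zero]
  exact A.zero_mem

private lemma fieldB_poly (hB : IsBigIdealRing (A.comap (Polynomial.constantCoeff (R := B)))) :
    IsField B := by
  set R := A.comap (Polynomial.constantCoeff (R := B)) with hR
  refine ⟨exists_pair_ne B, mul_comm, ?_⟩
  intro b hb
  let e : ℕ → ℕ → R := fun j k => if hk : k ≠ 0 then ⟨C b ^ j * X ^ k, memR_poly A b j k hk⟩ else 1
  have he : ∀ j k (hk : k ≠ 0), ((e j k : R) : B[X]) = C b ^ j * X ^ k := by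
    intro j k hk; simp [e, hk]
  let SJ : Set R := {e 4 1, e 3 2, e 1 4, e 0 5}
  let SI : Set R := insert (e 2 3) SJ
  let J : Ideal R := Ideal.span SJ
  let I : Ideal R := Ideal.span SI
  have hJI : J ≤ I := Ideal.span_mono (Set.subset_insert _ _)
  have hprod : ∀ j k j' k', k ≠ 0 → k' ≠ 0 →
      (e j k) * (e j' k') = e (j + j') (k + k') := by
    intro j k j' k' hk hk'
    have hkk' : k + k' ≠ 0 := by omega
    apply Subtype.ext
    push_cast [he _ _ hk, he _ _ hk', he _ _ hkk']
    ring
  have hmemJJ : ∀ m₁ m₂ : R, m₁ ∈ SJ → m₂ ∈ SJ → m₁ * m₂ ∈ J * J := fun m₁ m₂ h1 h2 =>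
    Ideal.mul_mem_mul (Ideal.subset_span h1) (Ideal.subset_span h2)
  have h14 : e 4 1 ∈ SJ := by simp [SJ]
  have h32 : e 3 2 ∈ SJ := by simp [SJ]
  have h44 : e 1 4 ∈ SJ := by simp [SJ]
  have h05 : e 0 5 ∈ SJ := by simp [SJ]
  have hsq : J ^ 2 = I ^ 2 := by
    rw [pow_two, pow_two]
    refine le_antisymm (Ideal.mul_mono hJI hJI) ?_
    rw [show I * I = Ideal.span (SI * SI) from Ideal.span_mul_span' SI SI]
    refine Ideal.span_le.mpr ?_
    rintro z hz
    rcases Set.mem_mul.mp hz with ⟨x, hx, y, hy, rfl⟩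
    have hcase : ∀ y' : R, y' ∈ SJ → (e 2 3) * y' ∈ J * J := by
      intro y' hy'
      simp only [SJ, Set.mem_insert_iff, Set.mem_singleton_iff] at hy'
      rcases hy' with rfl | rfl | rfl | rfl
      · rw [show e 2 3 * e 4 1 = e 3 2 * e 3 2 by
          rw [hprod _ _ _ _ (by norm_num) (by norm_num),
            hprod _ _ _ _ (by norm_num) (by norm_num)]]
        exact hmemJJ _ _ h32 h32
      · rw [show e 2 3 * e 3 2 = e 4 1 * e 1 4 by
          rw [hprod _ _ _ _ (by norm_num) (by norm_num),
            hprod _ _ _ _ (by norm_num) (by norm_num)]]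
        exact hmemJJ _ _ h14 h44
      · rw [show e 2 3 * e 1 4 = e 3 2 * e 0 5 by
          rw [hprod _ _ _ _ (by norm_num) (by norm_num),
            hprod _ _ _ _ (by norm_num) (by norm_num)]]
        exact hmemJJ _ _ h32 h05
      · rw [show e 2 3 * e 0 5 = e 1 4 * e 1 4 by
          rw [hprod _ _ _ _ (by norm_num) (by norm_num),
            hprod _ _ _ _ (by norm_num) (by norm_num)]]
        exact hmemJJ _ _ h44 h44
    rcases hx with rfl | hx
    · rcases hy with rfl | hy
      · rw [show e 2 3 * e 2 3 = e 4 1 * e 0 5 by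
          rw [hprod _ _ _ _ (by norm_num) (by norm_num),
            hprod _ _ _ _ (by norm_num) (by norm_num)]]
        exact hmemJJ _ _ h14 h05
      · exact hcase y hy
    · rcases hy with rfl | hy
      · rw [mul_comm x (e 2 3)]; exact hcase x hx
      · exact hmemJJ _ _ hx hy
  -- now bigness forces J = I
  have hJeqI : J = I := by
    by_contra hne
    have hlt := hB I J (lt_of_le_of_ne hJI hne) 2 one_le_two
    rw [hsq] at hlt
    exact lt_irrefl _ hlt
  have he3J : e 2 3 ∈ J := by
    rw [hJeqI]
    exact Ideal.subset_span (Set.mem_insert _ _)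
  -- extract a representation
  have he3J' : e 2 3 ∈ Ideal.span (insert (e 4 1) (insert (e 3 2) (insert (e 1 4)
      ({e 0 5} : Set R)))) := he3J
  obtain ⟨r1, z1, hz1, hrep1⟩ := Ideal.mem_span_insert.mp he3J'
  obtain ⟨r2, z2, hz2, hrep2⟩ := Ideal.mem_span_insert.mp hz1
  obtain ⟨r4, z4, hz4, hrep4⟩ := Ideal.mem_span_insert.mp hz2
  obtain ⟨t, hrep5⟩ := Ideal.mem_span_singleton.mp hz4
  rw [hrep5] at hrep4; rw [hrep4] at hrep2; rw [hrep2] at hrep1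
  have hval : ((e 2 3 : R) : B[X]) =
      (r1 : B[X]) * ((e 4 1 : R) : B[X]) + ((r2 : B[X]) * ((e 3 2 : R) : B[X]) +
        ((r4 : B[X]) * ((e 1 4 : R) : B[X]) + ((e 0 5 : R) : B[X]) * (t : B[X]))) := by
    rw [hrep1]; push_cast; ring
  rw [he _ _ (by norm_num), he _ _ (by norm_num), he _ _ (by norm_num), he _ _ (by norm_num),
    he _ _ (by norm_num)] at hval
  have hco : ∀ (p : B[X]) (j k : ℕ),
      (p * (C b ^ j * X ^ k)).coeff 3 = b ^ j * (if k ≤ 3 then p.coeff (3 - k) else 0) := by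
    intro p j k
    rw [show p * (C b ^ j * X ^ k) = C (b ^ j) * (p * X ^ k) by rw [map_pow]; ring,
      Polynomial.coeff_C_mul, Polynomial.coeff_mul_X_pow']
  have hcoeff := congrArg (fun q : B[X] => q.coeff 3) hval
  simp only [Polynomial.coeff_add] at hcoeff
  rw [show (C b ^ 2 * X ^ 3 : B[X]) = 1 * (C b ^ 2 * X ^ 3) by ring,
    show (C b ^ 0 * X ^ 5 : B[X]) * (t : B[X]) = (t : B[X]) * (C b ^ 0 * X ^ 5) by ring,
    hco, hco, hco, hco, hco] at hcoeff
  norm_num at hcoeff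
  -- hcoeff : b ^ 2 = b^4 * coeff r1 2 + b^3 * coeff r2 1  (modulo shape)
  refine ⟨b * (r1 : B[X]).coeff 2 + (r2 : B[X]).coeff 1, ?_⟩
  have hcancel : b ^ 2 * 1 = b ^ 2 * (b * (b * (r1 : B[X]).coeff 2 + (r2 : B[X]).coeff 1)) := by
    linear_combination hcoeff
  have := mul_left_cancel₀ (pow_ne_zero 2 hb) hcancel
  exact this.symm

end PolyField


section PSField

variable {B : Type*} [CommRing B] [IsDomain B] (A : Subring B)

open PowerSeries Pointwise

private lemma memR_ps (b : B) (j k : ℕ) (hk : k ≠ 0) :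
    (PowerSeries.C (R := B) b ^ j * PowerSeries.X ^ k : PowerSeries B) ∈ A.comap (PowerSeries.constantCoeff (R := B)) := by
  simp only [Subring.mem_comap, map_mul, map_pow]
  rw [PowerSeries.constantCoeff_X, zero_pow hk, mul_zero]
  exact A.zero_mem

private lemma fieldB_ps (hB : IsBigIdealRing (A.comap (PowerSeries.constantCoeff (R := B)))) :
    IsField B := by
  set R := A.comap (PowerSeries.constantCoeff (R := B)) with hR
  refine ⟨exists_pair_ne B, mul_comm, ?_⟩
  intro b hb
  let e : ℕ → ℕ → R := fun j k => if hk : k ≠ 0 then ⟨C (R := B) b ^ j * X ^ k, memR_ps A b j k hk⟩ else 1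
  have he : ∀ j k (hk : k ≠ 0), ((e j k : R) : B⟦X⟧) = C (R := B) b ^ j * X ^ k := by
    intro j k hk; simp [e, hk]
  let SJ : Set R := {e 4 1, e 3 2, e 1 4, e 0 5}
  let SI : Set R := insert (e 2 3) SJ
  let J : Ideal R := Ideal.span SJ
  let I : Ideal R := Ideal.span SI
  have hJI : J ≤ I := Ideal.span_mono (Set.subset_insert _ _)
  have hprod : ∀ j k j' k', k ≠ 0 → k' ≠ 0 →
      (e j k) * (e j' k') = e (j + j') (k + k') := by
    intro j k j' k' hk hk'
    have hkk' : k + k' ≠ 0 := by omega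
    apply Subtype.ext
    push_cast [he _ _ hk, he _ _ hk', he _ _ hkk']
    ring
  have hmemJJ : ∀ m₁ m₂ : R, m₁ ∈ SJ → m₂ ∈ SJ → m₁ * m₂ ∈ J * J := fun m₁ m₂ h1 h2 =>
    Ideal.mul_mem_mul (Ideal.subset_span h1) (Ideal.subset_span h2)
  have h14 : e 4 1 ∈ SJ := by simp [SJ]
  have h32 : e 3 2 ∈ SJ := by simp [SJ]
  have h44 : e 1 4 ∈ SJ := by simp [SJ]
  have h05 : e 0 5 ∈ SJ := by simp [SJ]
  have hsq : J ^ 2 = I ^ 2 := by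
    rw [pow_two, pow_two]
    refine le_antisymm (Ideal.mul_mono hJI hJI) ?_
    rw [show I * I = Ideal.span (SI * SI) from Ideal.span_mul_span' SI SI]
    refine Ideal.span_le.mpr ?_
    rintro z hz
    rcases Set.mem_mul.mp hz with ⟨x, hx, y, hy, rfl⟩
    have hcase : ∀ y' : R, y' ∈ SJ → (e 2 3) * y' ∈ J * J := by
      intro y' hy'
      simp only [SJ, Set.mem_insert_iff, Set.mem_singleton_iff] at hy'
      rcases hy' with rfl | rfl | rfl | rfl
      · rw [show e 2 3 * e 4 1 = e 3 2 * e 3 2 by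
          rw [hprod _ _ _ _ (by norm_num) (by norm_num),
            hprod _ _ _ _ (by norm_num) (by norm_num)]]
        exact hmemJJ _ _ h32 h32
      · rw [show e 2 3 * e 3 2 = e 4 1 * e 1 4 by
          rw [hprod _ _ _ _ (by norm_num) (by norm_num),
            hprod _ _ _ _ (by norm_num) (by norm_num)]]
        exact hmemJJ _ _ h14 h44
      · rw [show e 2 3 * e 1 4 = e 3 2 * e 0 5 by
          rw [hprod _ _ _ _ (by norm_num) (by norm_num),
            hprod _ _ _ _ (by norm_num) (by norm_num)]]
        exact hmemJJ _ _ h32 h05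
      · rw [show e 2 3 * e 0 5 = e 1 4 * e 1 4 by
          rw [hprod _ _ _ _ (by norm_num) (by norm_num),
            hprod _ _ _ _ (by norm_num) (by norm_num)]]
        exact hmemJJ _ _ h44 h44
    rcases hx with rfl | hx
    · rcases hy with rfl | hy
      · rw [show e 2 3 * e 2 3 = e 4 1 * e 0 5 by
          rw [hprod _ _ _ _ (by norm_num) (by norm_num),
            hprod _ _ _ _ (by norm_num) (by norm_num)]]
        exact hmemJJ _ _ h14 h05
      · exact hcase y hy
    · rcases hy with rfl | hy
      · rw [mul_comm x (e 2 3)]; exact hcase x hx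
      · exact hmemJJ _ _ hx hy
  -- now bigness forces J = I
  have hJeqI : J = I := by
    by_contra hne
    have hlt := hB I J (lt_of_le_of_ne hJI hne) 2 one_le_two
    rw [hsq] at hlt
    exact lt_irrefl _ hlt
  have he3J : e 2 3 ∈ J := by
    rw [hJeqI]
    exact Ideal.subset_span (Set.mem_insert _ _)
  -- extract a representation
  have he3J' : e 2 3 ∈ Ideal.span (insert (e 4 1) (insert (e 3 2) (insert (e 1 4)
      ({e 0 5} : Set R)))) := he3J
  obtain ⟨r1, z1, hz1, hrep1⟩ := Ideal.mem_span_insert.mp he3J'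
  obtain ⟨r2, z2, hz2, hrep2⟩ := Ideal.mem_span_insert.mp hz1
  obtain ⟨r4, z4, hz4, hrep4⟩ := Ideal.mem_span_insert.mp hz2
  obtain ⟨t, hrep5⟩ := Ideal.mem_span_singleton.mp hz4
  rw [hrep5] at hrep4; rw [hrep4] at hrep2; rw [hrep2] at hrep1
  have hval : ((e 2 3 : R) : B⟦X⟧) =
      (r1 : B⟦X⟧) * ((e 4 1 : R) : B⟦X⟧) + ((r2 : B⟦X⟧) * ((e 3 2 : R) : B⟦X⟧) +
        ((r4 : B⟦X⟧) * ((e 1 4 : R) : B⟦X⟧) + ((e 0 5 : R) : B⟦X⟧) * (t : B⟦X⟧))) := by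
    rw [hrep1]; push_cast; ring
  rw [he _ _ (by norm_num), he _ _ (by norm_num), he _ _ (by norm_num), he _ _ (by norm_num),
    he _ _ (by norm_num)] at hval
  have hco : ∀ (p : B⟦X⟧) (j k : ℕ),
      (PowerSeries.coeff (R := B) 3) (p * (C (R := B) b ^ j * X ^ k)) = b ^ j * (if k ≤ 3 then PowerSeries.coeff (R := B) (3 - k) p else 0) := by
    intro p j k
    rw [show p * (C (R := B) b ^ j * X ^ k) = C (R := B) (b ^ j) * (p * X ^ k) by rw [map_pow]; ring,
      PowerSeries.coeff_C_mul, PowerSeries.coeff_mul_X_pow']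
  have hcoeff := congrArg (fun q : B⟦X⟧ => PowerSeries.coeff (R := B) 3 q) hval
  simp only [map_add] at hcoeff
  rw [show (C (R := B) b ^ 2 * X ^ 3 : B⟦X⟧) = 1 * (C (R := B) b ^ 2 * X ^ 3) by ring,
    show (C (R := B) b ^ 0 * X ^ 5 : B⟦X⟧) * (t : B⟦X⟧) = (t : B⟦X⟧) * (C (R := B) b ^ 0 * X ^ 5) by ring,
    hco, hco, hco, hco, hco] at hcoeff
  norm_num at hcoeff
  -- hcoeff : b ^ 2 = b^4 * coeff r1 2 + b^3 * coeff r2 1  (modulo shape)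
  refine ⟨b * PowerSeries.coeff (R := B) 2 (r1 : B⟦X⟧) + PowerSeries.coeff (R := B) 1 (r2 : B⟦X⟧), ?_⟩
  have hcancel : b ^ 2 * 1 = b ^ 2 * (b * (b * PowerSeries.coeff (R := B) 2 (r1 : B⟦X⟧) + PowerSeries.coeff (R := B) 1 (r2 : B⟦X⟧))) := by
    linear_combination hcoeff
  have := mul_left_cancel₀ (pow_ne_zero 2 hb) hcancel
  exact this.symm

end PSField


/-- **Corollary 3.3.**  Let `A ⊊ B` be an extension of integral domains and `X` an
indeterminate.  Let `R = A + X·B[X]` (resp. `R = A + X·B[[X]]`), the ring of polynomials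
(resp. power series) over `B` whose constant term lies in `A`.  If `R` is a big ideal
domain, then `A` is a big ideal domain and `B` is a field. -/
theorem isBigIdealRing_APlusXBX (B : Type*) [CommRing B] [IsDomain B]
    (A : Subring B) (hA : A ≠ ⊤) :
    (IsBigIdealRing (A.comap (Polynomial.constantCoeff (R := B))) →
      IsBigIdealRing A ∧ IsField B) ∧
    (IsBigIdealRing (A.comap (PowerSeries.constantCoeff (R := B))) →
      IsBigIdealRing A ∧ IsField B) := by
  constructor
  · intro H
    exact ⟨bigA_poly A H, fieldB_poly A H⟩
  · intro H
    exact ⟨bigA_ps A H, fieldB_ps A H⟩
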